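/- Let n = 2n₀ + 1 be an odd integer with n₀ ≥ 1, let k ≥ 1, and let M₁, …, M_k be matrices each of the form I - (e_i - e_j)(e_i - e_j)ᵀ/2 for some i > j. Then the product M_k ⋯ M₁ is not of the form 𝟙·βᵀ for any vector β ∈ ℝⁿ; equivalently, δ(M_k ⋯ M₁) > 0. -/

import Mathlib

open Matrix

private lemma colsum_one {n : ℕ} (L : List (Matrix (Fin n) (Fin n) ℝ))
    (h : ∀ A ∈ L, ∀ j, ∑ i, A i j = 1) : ∀ j, ∑ i, L.prod i j = 1 := by
  induction L with
  | nil => intro j; simp [Matrix.one_apply]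
  | cons A L ih =>
    intro j
    have hA := h A (List.mem_cons_self)
    have hL := ih (fun B hB => h B (List.mem_cons_of_mem A hB))
    simp only [List.prod_cons, Matrix.mul_apply]
    rw [Finset.sum_comm]
    calc ∑ x, ∑ i, A i x * L.prod x j
        = ∑ x, (∑ i, A i x) * L.prod x j := by
          simp [Finset.sum_mul]
      _ = ∑ x, L.prod x j := by simp [hA]
      _ = 1 := hL j

private lemma dyadic_prod {n : ℕ} (L : List (Matrix (Fin n) (Fin n) ℝ))
    (h : ∀ A ∈ L, ∀ i j, ∃ z : ℤ, A i j = z / 2) :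
    ∀ i j, ∃ z : ℤ, L.prod i j = z / 2 ^ L.length := by
  induction L with
  | nil =>
    intro i j
    by_cases hij : i = j
    · exact ⟨1, by simp [hij, Matrix.one_apply]⟩
    · exact ⟨0, by simp [Matrix.one_apply, hij]⟩
  | cons A L ih =>
    intro i j
    have hA := h A (List.mem_cons_self)
    have hL := ih (fun B hB => h B (List.mem_cons_of_mem A hB))
    choose z1 hz1 using hA
    choose z2 hz2 using fun x => hL x j
    refine ⟨∑ x, z1 i x * z2 x, ?_⟩
    simp only [List.prod_cons, Matrix.mul_apply, List.length_cons]
    push_cast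
    rw [Finset.sum_div]
    apply Finset.sum_congr rfl
    intro x _
    rw [hz1 i x, hz2 x]
    ring

theorem no_finite_consensus_odd (n₀ : ℕ) (hn₀ : 1 ≤ n₀) (k : ℕ) (hk : 1 ≤ k)
    (M : Fin k → Matrix (Fin (2 * n₀ + 1)) (Fin (2 * n₀ + 1)) ℝ)
    (hM : ∀ t, ∃ i j : Fin (2 * n₀ + 1), j < i ∧
      M t = 1 - (1/2 : ℝ) • vecMulVec (Pi.single i 1 - Pi.single j 1)
        (Pi.single i 1 - Pi.single j 1)) :
    ¬ ∃ β : Fin (2 * n₀ + 1) → ℝ,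
      (List.ofFn M).prod = Matrix.of (fun _ b => β b) := by
  rintro ⟨β, hβ⟩
  -- each factor's entries are half-integers
  have hhalf : ∀ A ∈ List.ofFn M, ∀ i j : Fin (2*n₀+1), ∃ z : ℤ, A i j = z / 2 := by
    intro A hA i j
    obtain ⟨t, rfl⟩ := (List.mem_ofFn (f := M)).1 hA
    obtain ⟨i', j', hij, hMt⟩ := hM t
    refine ⟨(if i = j then 2 else 0) -
      ((if i = i' then 1 else 0) - (if i = j' then 1 else 0)) *
      ((if j = i' then 1 else 0) - (if j = j' then 1 else 0)), ?_⟩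
    rw [hMt]
    simp only [Matrix.sub_apply, Matrix.one_apply, Matrix.smul_apply,
      vecMulVec_apply, Pi.sub_apply, Pi.single_apply, smul_eq_mul]
    push_cast
    split_ifs <;> ring
  -- each factor has column sums 1
  have hcolfac : ∀ A ∈ List.ofFn M, ∀ j : Fin (2*n₀+1), ∑ i, A i j = 1 := by
    intro A hA j
    obtain ⟨t, rfl⟩ := (List.mem_ofFn (f := M)).1 hA
    obtain ⟨i', j', hij, hMt⟩ := hM t
    have hd : ∑ i, ((Pi.single i' 1 - Pi.single j' 1 : Fin (2*n₀+1) → ℝ)) i = 0 := by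
      simp [Pi.sub_apply, Pi.single_apply]
    rw [hMt]
    simp only [Matrix.sub_apply, Matrix.one_apply, Matrix.smul_apply,
      vecMulVec_apply, smul_eq_mul]
    rw [Finset.sum_sub_distrib]
    have h1 : ∑ i, (if i = j then (1:ℝ) else 0) = 1 := by simp
    have h2 : ∑ i, (1/2 : ℝ) *
        ((Pi.single i' 1 - Pi.single j' 1 : Fin (2*n₀+1) → ℝ) i *
         (Pi.single i' 1 - Pi.single j' 1 : Fin (2*n₀+1) → ℝ) j) = 0 := by
      rw [← Finset.mul_sum, ← Finset.sum_mul, hd]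
      ring
    rw [h1, h2, sub_zero]
  have hcol := colsum_one (List.ofFn M) hcolfac
  -- therefore β j = 1/n
  have hβval : ∀ j, β j = 1 / (2*n₀+1 : ℝ) := by
    intro j
    have := hcol j
    rw [hβ] at this
    simp only [Matrix.of_apply, Finset.sum_const, Finset.card_univ,
      Fintype.card_fin, nsmul_eq_mul] at this
    have hnpos : (0:ℝ) < (2*n₀+1 : ℝ) := by positivity
    field_simp at this ⊢
    push_cast at this
    linarith
  -- dyadic entries of the product
  obtain ⟨z, hz⟩ := dyadic_prod (List.ofFn M) hhalf 0 0
  rw [hβ] at hz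
  simp only [Matrix.of_apply] at hz
  rw [hβval 0] at hz
  rw [List.length_ofFn] at hz
  -- 1/n = z/2^k  →  2^k = z * (2*n₀+1)
  have hnpos : (0:ℝ) < (2*n₀+1 : ℝ) := by positivity
  have h2pos : (0:ℝ) < (2:ℝ)^k := by positivity
  have key : (2:ℝ)^k = z * (2*n₀+1) := by
    field_simp at hz
    linarith
  have keyZ : (2:ℤ)^k = z * (2*n₀+1) := by
    have : ((2^k : ℤ) : ℝ) = ((z * (2*n₀+1) : ℤ) : ℝ) := by push_cast; linarith [key]
    exact_mod_cast this
  have hdvd : (2*n₀+1 : ℤ) ∣ (2:ℤ)^k := ⟨z, by linarith [keyZ]⟩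
  have hdvdN : 2*n₀+1 ∣ 2^k := by
    have : ((2*n₀+1 : ℕ) : ℤ) ∣ ((2^k : ℕ) : ℤ) := by push_cast; exact hdvd
    exact_mod_cast this
  have hcop : Nat.Coprime (2*n₀+1) 2 :=
    Nat.coprime_comm.mp (Nat.prime_two.coprime_iff_not_dvd.mpr (by omega))
  have := Nat.Coprime.eq_one_of_dvd (hcop.pow_right k) hdvdN
  omega
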